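/- Let Σ be a d×d positive definite real matrix and let V be a d×d diagonal positive definite matrix such that V − Σ⁻¹ is positive semi-definite. Then for every vector x ∈ ℝ^d, the Gaussian orthant probability satisfies (2π)^{-d/2} det(Σ)^{-1/2} ∫_{u ∈ ∏_{c=1}^d [x_c, ∞)} exp(−½ uᵀΣ⁻¹u) du ≥ (2π)^{-d/2} det(VΣ)^{-1/2} exp(−½ xᵀΣ⁻¹x) ∏_{c=1}^d R((V^{-1/2}Σ⁻¹x)_c), where R is the Mills ratio of the standard normal distribution. -/

import Mathlib

open Matrix

/-- The Mills ratio of the standard normal distribution: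
`R(x) = e^{x²/2} ∫_x^∞ e^{-t²/2} dt`. -/
noncomputable def millsRatio (x : ℝ) : ℝ :=
  Real.exp (x ^ 2 / 2) * ∫ t in Set.Ioi x, Real.exp (-t ^ 2 / 2)

open MeasureTheory Set

lemma my_setIntegral_add_left {G : Type*} [MeasurableSpace G] [AddGroup G]
    [MeasurableAdd G] (μ : Measure G) [μ.IsAddLeftInvariant]
    (f : G → ℝ) {S : Set G} (hS : MeasurableSet S) (x : G) :
    ∫ u in S, f u ∂μ = ∫ w in (fun w => x + w) ⁻¹' S, f (x + w) ∂μ := by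
  rw [← integral_indicator hS,
      ← integral_add_left_eq_self (S.indicator f) x,
      ← integral_indicator (hS.preimage (measurable_const_add x))]
  refine integral_congr_ae (Filter.Eventually.of_forall fun w => ?_)
  exact Set.indicator_comp_right (fun w => x + w) (s := S) (g := f)

lemma my_integrable_exp_affine {v : ℝ} (a : ℝ) (hv : 0 < v) :
    Integrable (fun t : ℝ => Real.exp (-(a * t) - v * t ^ 2 / 2)) := by
  have h : Integrable (fun t : ℝ => Real.exp (-(v/2) * t ^ 2)) :=
    integrable_exp_neg_mul_sq (by positivity)
  have h2 := (h.comp_add_right (a / v)).const_mul (Real.exp (a ^ 2 / (2 * v)))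
  refine h2.congr ?_
  refine Filter.Eventually.of_forall fun t => ?_
  simp only [← Real.exp_add]
  congr 1
  field_simp
  ring

lemma my_int_mills {v : ℝ} (a : ℝ) (hv : 0 < v) :
    ∫ t in Ioi (0:ℝ), Real.exp (-(a * t) - v * t ^ 2 / 2)
      = (Real.sqrt v)⁻¹ * millsRatio ((Real.sqrt v)⁻¹ * a) := by
  set s := Real.sqrt v with hs_def
  have hs : 0 < s := Real.sqrt_pos.mpr hv
  have hs2 : s ^ 2 = v := Real.sq_sqrt hv.le
  set b := s⁻¹ * a with hb_def
  have hab : a = s * b := by rw [hb_def, ← mul_assoc, mul_inv_cancel₀ hs.ne', one_mul]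
  have key : ∀ t : ℝ, Real.exp (-(a * t) - v * t ^ 2 / 2)
      = Real.exp (b ^ 2 / 2) * Real.exp (-(s * t + b) ^ 2 / 2) := by
    intro t
    rw [← Real.exp_add]
    congr 1
    rw [hab, ← hs2]
    ring
  simp_rw [key]
  rw [integral_const_mul]
  have h1 : ∫ t in Ioi (0:ℝ), Real.exp (-(s * t + b) ^ 2 / 2)
      = s⁻¹ * ∫ u in Ioi (0:ℝ), Real.exp (-(u + b) ^ 2 / 2) := by
    have := integral_comp_mul_left_Ioi (fun u => Real.exp (-(u + b) ^ 2 / 2)) 0 hs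
    simp only [mul_zero, smul_eq_mul] at this
    exact this
  have h2 : ∫ u in Ioi (0:ℝ), Real.exp (-(u + b) ^ 2 / 2)
      = ∫ t in Ioi b, Real.exp (-t ^ 2 / 2) := by
    have := my_setIntegral_add_left (volume : Measure ℝ)
      (fun t => Real.exp (-t ^ 2 / 2)) (measurableSet_Ioi (a := b)) b
    rw [this]
    have hpre : (fun w => b + w) ⁻¹' Ioi b = Ioi 0 := by
      ext w; simp
    rw [hpre]
    refine setIntegral_congr_fun measurableSet_Ioi fun u _ => ?_
    rw [add_comm]
  rw [h1, h2, millsRatio]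
  ring

open scoped MatrixOrder in
lemma my_integrable_gauss {d : ℕ} {A : Matrix (Fin d) (Fin d) ℝ} (hA : A.PosDef) :
    Integrable (fun u : Fin d → ℝ => Real.exp (-(1/2) * (u ⬝ᵥ A.mulVec u))) := by
  classical
  set B := CFC.sqrt A with hB_def
  have hBB : B * B = A := CFC.sqrt_mul_sqrt_self A hA.posSemidef.nonneg
  have hBH : Bᵀ = B := by
    rw [← Matrix.conjTranspose_eq_transpose_of_trivial]
    exact (CFC.sqrt_nonneg A).posSemidef.1
  have hdetB : B.det ≠ 0 := by
    intro h
    have : A.det = 0 := by rw [← hBB, Matrix.det_mul, h, mul_zero]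
    exact hA.det_pos.ne' this
  have hquad : ∀ u : Fin d → ℝ, u ⬝ᵥ A.mulVec u = ∑ i, (B.mulVec u i) ^ 2 := by
    intro u
    rw [← hBB, ← Matrix.mulVec_mulVec, Matrix.dotProduct_mulVec]
    have huB : u ᵥ* B = B *ᵥ u := by rw [← Matrix.mulVec_transpose, hBH]
    rw [huB, dotProduct]
    exact Finset.sum_congr rfl fun i _ => (sq _).symm
  have hg : Integrable (fun y : Fin d → ℝ => ∏ i, Real.exp (-(1/2) * (y i) ^ 2)) := by
    exact Integrable.fintype_prod (f := fun (_ : Fin d) (t : ℝ) => Real.exp (-(1/2) * t ^ 2))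
      fun _ => integrable_exp_neg_mul_sq (by norm_num : (0:ℝ) < 1/2)
  have hmap := Real.map_matrix_volume_pi_eq_smul_volume_pi (M := B) hdetB
  have hg' : Integrable (fun y : Fin d → ℝ => ∏ i, Real.exp (-(1/2) * (y i) ^ 2))
      (Measure.map (⇑(Matrix.toLin' B)) volume) := by
    rw [hmap]
    refine (integrable_smul_measure ?_ ENNReal.ofReal_ne_top).mpr hg
    simp only [ne_eq, ENNReal.ofReal_eq_zero, not_le]
    exact abs_pos.mpr (inv_ne_zero hdetB)
  have hmeas : Measurable (⇑(Matrix.toLin' B)) :=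
    (LinearMap.continuous_on_pi _).measurable
  have hcomp := (integrable_map_measure hg'.aestronglyMeasurable hmeas.aemeasurable).mp hg'
  refine hcomp.congr (Filter.Eventually.of_forall fun u => ?_)
  simp only [Function.comp_apply, Matrix.toLin'_apply]
  rw [hquad, Finset.mul_sum, Real.exp_sum]

lemma my_key {d : ℕ} (A : Matrix (Fin d) (Fin d) ℝ) (hA : A.PosDef)
    (v : Fin d → ℝ) (hv : ∀ i, 0 < v i)
    (hVS : (Matrix.diagonal v - A).PosSemidef) (x : Fin d → ℝ) :
    Real.exp (-(1/2 : ℝ) * (x ⬝ᵥ A.mulVec x)) *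
      ∏ c, ((Real.sqrt (v c))⁻¹ * millsRatio ((Real.sqrt (v c))⁻¹ * (A.mulVec x c)))
    ≤ ∫ u in {u : Fin d → ℝ | ∀ c, x c ≤ u c}, Real.exp (-(1/2 : ℝ) * (u ⬝ᵥ A.mulVec u)) := by
  classical
  set a : Fin d → ℝ := A.mulVec x with ha_def
  set g : Fin d → ℝ → ℝ := fun c t => Real.exp (-(a c * t) - v c * t ^ 2 / 2) with hg_def
  have hg_int : ∀ c, Integrable (g c) := fun c => my_integrable_exp_affine (a c) (hv c)
  have hSx_meas : MeasurableSet {u : Fin d → ℝ | ∀ c, x c ≤ u c} := by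
    have : {u : Fin d → ℝ | ∀ c, x c ≤ u c} = Set.pi Set.univ (fun c => Ici (x c)) := by
      ext u; simp [Set.mem_pi, Pi.le_def]
    rw [this]; exact MeasurableSet.univ_pi fun c => measurableSet_Ici
  have hS0_meas : MeasurableSet {w : Fin d → ℝ | ∀ c, 0 ≤ w c} := by
    have : {w : Fin d → ℝ | ∀ c, 0 ≤ w c} = Set.pi Set.univ (fun c => Ici (0:ℝ)) := by
      ext u; simp [Set.mem_pi, Pi.le_def]
    rw [this]; exact MeasurableSet.univ_pi fun c => measurableSet_Ici
  have hAT : Aᵀ = A := by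
    rw [← Matrix.conjTranspose_eq_transpose_of_trivial]; exact hA.1
  have hsymm : ∀ w : Fin d → ℝ, x ⬝ᵥ A.mulVec w = a ⬝ᵥ w := by
    intro w
    rw [Matrix.dotProduct_mulVec, ← Matrix.mulVec_transpose, hAT, ← ha_def]
  have hdiag : ∀ w : Fin d → ℝ, w ⬝ᵥ (Matrix.diagonal v).mulVec w = ∑ c, v c * w c ^ 2 := by
    intro w
    rw [dotProduct]
    refine Finset.sum_congr rfl fun c _ => ?_
    rw [Matrix.mulVec_diagonal]
    ring
  have hVle : ∀ w : Fin d → ℝ, w ⬝ᵥ A.mulVec w ≤ ∑ c, v c * w c ^ 2 := by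
    intro w
    have h0 := hVS.dotProduct_mulVec_nonneg w
    rw [star_trivial, Matrix.sub_mulVec, dotProduct_sub, hdiag w] at h0
    linarith
  have hpoint : ∀ w : Fin d → ℝ,
      Real.exp (-(1/2 : ℝ) * (x ⬝ᵥ A.mulVec x)) * ∏ c, g c (w c)
        ≤ Real.exp (-(1/2 : ℝ) * ((x + w) ⬝ᵥ A.mulVec (x + w))) := by
    intro w
    have hexpand : (x + w) ⬝ᵥ A.mulVec (x + w)
        = x ⬝ᵥ A.mulVec x + 2 * (a ⬝ᵥ w) + w ⬝ᵥ A.mulVec w := by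
      rw [Matrix.mulVec_add, dotProduct_add, add_dotProduct, add_dotProduct, hsymm w]
      have hwa : w ⬝ᵥ a = a ⬝ᵥ w := dotProduct_comm w a
      rw [ha_def] at hwa ⊢
      rw [hwa]
      ring
    have hprod : ∏ c, g c (w c) = Real.exp (∑ c, (-(a c * w c) - v c * w c ^ 2 / 2)) := by
      rw [Real.exp_sum]
    rw [hprod, ← Real.exp_add, hexpand]
    apply Real.exp_le_exp.mpr
    have h1 := hVle w
    have h2 : a ⬝ᵥ w = ∑ c, a c * w c := rfl
    have h3 : ∑ c, (-(a c * w c) - v c * w c ^ 2 / 2)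
        = -(∑ c, a c * w c) - (∑ c, v c * w c ^ 2) / 2 := by
      rw [Finset.sum_sub_distrib, Finset.sum_div, ← Finset.sum_neg_distrib]
    rw [h2] at *
    rw [h3]
    linarith
  have hGind : ∀ w : Fin d → ℝ,
      ({w : Fin d → ℝ | ∀ c, 0 ≤ w c}).indicator (fun w => ∏ c, g c (w c)) w
      = ∏ c, (Ici (0:ℝ)).indicator (g c) (w c) := by
    intro w
    by_cases hw : w ∈ {w : Fin d → ℝ | ∀ c, 0 ≤ w c}
    · rw [Set.indicator_of_mem hw]
      exact Finset.prod_congr rfl fun c _ => (Set.indicator_of_mem (hw c) _).symm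
    · rw [Set.indicator_of_notMem hw]
      obtain ⟨c, hc⟩ := not_forall.mp hw
      exact (Finset.prod_eq_zero (Finset.mem_univ c) (Set.indicator_of_notMem hc _)).symm
  have hG_int : IntegrableOn (fun w : Fin d → ℝ => ∏ c, g c (w c)) {w | ∀ c, 0 ≤ w c} := by
    rw [← integrable_indicator_iff hS0_meas]
    have hI : Integrable (fun w : Fin d → ℝ => ∏ c, (Ici (0:ℝ)).indicator (g c) (w c)) :=
      Integrable.fintype_prod (f := fun c => (Ici (0:ℝ)).indicator (g c))
        fun c => (hg_int c).indicator measurableSet_Ici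
    exact hI.congr (Filter.Eventually.of_forall fun w => (hGind w).symm)
  have hf_int : Integrable (fun u : Fin d → ℝ => Real.exp (-(1/2 : ℝ) * (u ⬝ᵥ A.mulVec u))) :=
    my_integrable_gauss hA
  have step1 : (∫ u in {u : Fin d → ℝ | ∀ c, x c ≤ u c},
        Real.exp (-(1/2 : ℝ) * (u ⬝ᵥ A.mulVec u)))
      = ∫ w in {w : Fin d → ℝ | ∀ c, 0 ≤ w c},
          Real.exp (-(1/2 : ℝ) * ((x + w) ⬝ᵥ A.mulVec (x + w))) := by
    have hpre : (fun w : Fin d → ℝ => x + w) ⁻¹' {u | ∀ c, x c ≤ u c}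
        = {w : Fin d → ℝ | ∀ c, 0 ≤ w c} := by
      ext w
      simp only [Set.mem_preimage, Set.mem_setOf_eq, Pi.add_apply]
      exact forall_congr' fun c => le_add_iff_nonneg_right (x c)
    rw [my_setIntegral_add_left volume _ hSx_meas x, hpre]
  have step2 : Real.exp (-(1/2 : ℝ) * (x ⬝ᵥ A.mulVec x)) *
        ∫ w in {w : Fin d → ℝ | ∀ c, 0 ≤ w c}, ∏ c, g c (w c)
      ≤ ∫ w in {w : Fin d → ℝ | ∀ c, 0 ≤ w c},
          Real.exp (-(1/2 : ℝ) * ((x + w) ⬝ᵥ A.mulVec (x + w))) := by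
    rw [← integral_const_mul]
    exact setIntegral_mono_on (hG_int.const_mul _)
      ((hf_int.comp_add_left x).integrableOn) hS0_meas fun w _ => hpoint w
  have step3 : (∫ w in {w : Fin d → ℝ | ∀ c, 0 ≤ w c}, ∏ c, g c (w c))
      = ∏ c, ∫ t in Ioi (0:ℝ), g c t := by
    rw [← integral_indicator hS0_meas]
    have h := integral_congr_ae (μ := (volume : Measure (Fin d → ℝ)))
      (Filter.Eventually.of_forall hGind)
    rw [h, integral_fintype_prod_volume_eq_prod (f := fun c => (Ici (0:ℝ)).indicator (g c))]
    refine Finset.prod_congr rfl fun c _ => ?_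
    rw [integral_indicator measurableSet_Ici, integral_Ici_eq_integral_Ioi]
  have step4 : ∀ c, (∫ t in Ioi (0:ℝ), g c t)
      = (Real.sqrt (v c))⁻¹ * millsRatio ((Real.sqrt (v c))⁻¹ * a c) :=
    fun c => my_int_mills (a c) (hv c)
  calc Real.exp (-(1/2 : ℝ) * (x ⬝ᵥ A.mulVec x)) *
      ∏ c, ((Real.sqrt (v c))⁻¹ * millsRatio ((Real.sqrt (v c))⁻¹ * a c))
      = Real.exp (-(1/2 : ℝ) * (x ⬝ᵥ A.mulVec x)) *
        ∫ w in {w : Fin d → ℝ | ∀ c, 0 ≤ w c}, ∏ c, g c (w c) := by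
        rw [step3]
        congr 1
        exact (Finset.prod_congr rfl fun c _ => step4 c).symm
    _ ≤ ∫ w in {w : Fin d → ℝ | ∀ c, 0 ≤ w c},
          Real.exp (-(1/2 : ℝ) * ((x + w) ⬝ᵥ A.mulVec (x + w))) := step2
    _ = ∫ u in {u : Fin d → ℝ | ∀ c, x c ≤ u c},
          Real.exp (-(1/2 : ℝ) * (u ⬝ᵥ A.mulVec u)) := step1.symm
/-- Lower bound on the Gaussian orthant probability: for `Σ` positive definite,
`V` diagonal positive definite with `V - Σ⁻¹` positive semi-definite, and any `x ∈ ℝ^d`,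
`(2π)^{-d/2} det(Σ)^{-1/2} ∫_{u ≥ x} exp(-½ uᵀΣ⁻¹u) du ≥
 (2π)^{-d/2} det(VΣ)^{-1/2} exp(-½ xᵀΣ⁻¹x) ∏_c R((V^{-1/2}Σ⁻¹x)_c)`. -/
theorem gaussian_orthant_lower_bound (d : ℕ)
    (S : Matrix (Fin d) (Fin d) ℝ) (hS : S.PosDef)
    (v : Fin d → ℝ) (hv : ∀ i, 0 < v i)
    (hVS : (Matrix.diagonal v - S⁻¹).PosSemidef)
    (x : Fin d → ℝ) :
    (2 * Real.pi) ^ (-(d : ℝ) / 2) * S.det ^ (-(1 : ℝ) / 2) *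
        ∫ u in {u : Fin d → ℝ | ∀ c, x c ≤ u c},
          Real.exp (-(1 / 2) * (u ⬝ᵥ S⁻¹.mulVec u))
      ≥ (2 * Real.pi) ^ (-(d : ℝ) / 2) * (Matrix.diagonal v * S).det ^ (-(1 : ℝ) / 2) *
          Real.exp (-(1 / 2) * (x ⬝ᵥ S⁻¹.mulVec x)) *
          ∏ c, millsRatio
            (((Matrix.diagonal fun i => (Real.sqrt (v i))⁻¹).mulVec (S⁻¹.mulVec x)) c) := by
  classical
  have hA : (S⁻¹).PosDef := hS.inv
  have key := my_key S⁻¹ hA v hv hVS x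
  have hdet : ((Matrix.diagonal v * S).det : ℝ) ^ (-(1 : ℝ) / 2)
      = (∏ i, (Real.sqrt (v i))⁻¹) * S.det ^ (-(1 : ℝ) / 2) := by
    have hprod_pos : (0:ℝ) < ∏ i, v i := Finset.prod_pos fun i _ => hv i
    rw [Matrix.det_mul, Matrix.det_diagonal, Real.mul_rpow hprod_pos.le hS.det_pos.le]
    congr 1
    rw [← Real.finset_prod_rpow _ _ (fun i _ => (hv i).le)]
    refine Finset.prod_congr rfl fun i _ => ?_
    rw [show (-(1:ℝ)/2) = -(1/2) by norm_num, Real.rpow_neg (hv i).le, ← Real.sqrt_eq_rpow]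
  have hmarg : ∀ c, ((Matrix.diagonal fun i => (Real.sqrt (v i))⁻¹).mulVec (S⁻¹.mulVec x)) c
      = (Real.sqrt (v c))⁻¹ * (S⁻¹.mulVec x c) := fun c => Matrix.mulVec_diagonal _ _ _
  rw [ge_iff_le]
  calc (2 * Real.pi) ^ (-(d : ℝ) / 2) * (Matrix.diagonal v * S).det ^ (-(1 : ℝ) / 2) *
          Real.exp (-(1 / 2) * (x ⬝ᵥ S⁻¹.mulVec x)) *
          ∏ c, millsRatio
            (((Matrix.diagonal fun i => (Real.sqrt (v i))⁻¹).mulVec (S⁻¹.mulVec x)) c)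
      = ((2 * Real.pi) ^ (-(d : ℝ) / 2) * S.det ^ (-(1 : ℝ) / 2)) *
        (Real.exp (-(1/2 : ℝ) * (x ⬝ᵥ S⁻¹.mulVec x)) *
          ∏ c, ((Real.sqrt (v c))⁻¹ *
            millsRatio ((Real.sqrt (v c))⁻¹ * (S⁻¹.mulVec x c)))) := by
        rw [hdet, Finset.prod_mul_distrib]
        simp_rw [hmarg]
        ring
    _ ≤ ((2 * Real.pi) ^ (-(d : ℝ) / 2) * S.det ^ (-(1 : ℝ) / 2)) *
        ∫ u in {u : Fin d → ℝ | ∀ c, x c ≤ u c},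
          Real.exp (-(1/2 : ℝ) * (u ⬝ᵥ S⁻¹.mulVec u)) := by
        refine mul_le_mul_of_nonneg_left key ?_
        exact mul_nonneg (Real.rpow_nonneg (by positivity) _)
          (Real.rpow_nonneg hS.det_pos.le _)
    _ = (2 * Real.pi) ^ (-(d : ℝ) / 2) * S.det ^ (-(1 : ℝ) / 2) *
        ∫ u in {u : Fin d → ℝ | ∀ c, x c ≤ u c},
          Real.exp (-(1 / 2) * (u ⬝ᵥ S⁻¹.mulVec u)) := by rw [mul_assoc]
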